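/- In ℤ² with 4-adjacency, if a finite connected set P of cells does not contain cell c but the set P ∪ {c} is such that in the final full shape c is attached to P only via its north and south neighbors (both in P) while its east and west neighbors are not in P, then P ∪ {c} has a hole or P is disconnected; contrapositive: if P is connected and P ∪ {c} has no hole, and at least two of c's four neighbors are in P, then two adjacent (perpendicular) neighbors of c are in P. -/

import Mathlib

/-- 4-adjacency on `ℤ²`. -/
def adj (p q : ℤ × ℤ) : Prop := |p.1 - q.1| + |p.2 - q.2| = 1

/-- A set of cells is connected if any two of its cells are joined by a path of
adjacent cells staying inside the set. -/
def ConnectedIn (S : Set (ℤ × ℤ)) : Prop :=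
  ∀ p ∈ S, ∀ q ∈ S,
    Relation.ReflTransGen (fun a b => adj a b ∧ a ∈ S ∧ b ∈ S) p q

/-- A set has a hole if its complement has a bounded connected component. -/
def HasHole (S : Set (ℤ × ℤ)) : Prop :=
  ∃ x ∉ S, ∃ B : ℤ, ∀ q : ℤ × ℤ,
    Relation.ReflTransGen (fun a b => adj a b ∧ a ∉ S ∧ b ∉ S) x q →
      |q.1| ≤ B ∧ |q.2| ≤ B

/- ### Auxiliary machinery -/

lemma adj_iff {a b : ℤ × ℤ} : adj a b ↔
    ((a.1 = b.1 ∧ (a.2 = b.2 + 1 ∨ b.2 = a.2 + 1)) ∨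
     (a.2 = b.2 ∧ (a.1 = b.1 + 1 ∨ b.1 = a.1 + 1))) := by
  unfold adj
  rw [Int.abs_eq_natAbs, Int.abs_eq_natAbs]
  omega

open Classical in
noncomputable def ind (p : Prop) : ZMod 2 := if p then 1 else 0

lemma ind_pos {p : Prop} (h : p) : ind p = 1 := by simp [ind, h]
lemma ind_neg {p : Prop} (h : ¬p) : ind p = 0 := by simp [ind, h]

lemma ind_congr {p q : Prop} (h : p ↔ q) : ind p = ind q := by
  by_cases hp : p
  · rw [ind_pos hp, ind_pos (h.mp hp)]
  · rw [ind_neg hp, ind_neg (fun hq => hp (h.mpr hq))]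

lemma ind_add_ind (p q : Prop) : ind p + ind q = ind (¬(p ↔ q)) := by
  by_cases hp : p <;> by_cases hq : q
  · rw [ind_pos hp, ind_pos hq, ind_neg (by tauto)]; decide
  · rw [ind_pos hp, ind_neg hq, ind_pos (by tauto)]; decide
  · rw [ind_neg hp, ind_pos hq, ind_pos (by tauto)]; decide
  · rw [ind_neg hp, ind_neg hq, ind_neg (by tauto)]; decide

lemma zmod2_eq_of_add_eq_zero : ∀ x y : ZMod 2, x + y = 0 → x = y := by decide
lemma zmod2_cases : ∀ x : ZMod 2, x = 0 ∨ x = 1 := by decide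
lemma zmod2_add_self : ∀ x : ZMod 2, x + x = 0 := by decide
lemma zmod2_tele : ∀ x y z : ZMod 2, (x + y) + (y + z) = x + z := by decide

/-- A step of a loop crosses the horizontal half-line to the right of `q`
(at height `q.2 + 1/2`). -/
def pcross (q : ℤ × ℤ) (st : (ℤ × ℤ) × (ℤ × ℤ)) : Prop :=
  q.1 < st.1.1 ∧ ((st.1.2 = q.2 ∧ st.2.2 = q.2 + 1) ∨ (st.1.2 = q.2 + 1 ∧ st.2.2 = q.2))

noncomputable def crossZ (q : ℤ × ℤ) (L : List (ℤ × ℤ)) : ZMod 2 :=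
  ((L.zip L.tail).map fun st => ind (pcross q st)).sum

lemma sum_map_congr {α : Type*} {l : List α} {f g : α → ZMod 2}
    (h : ∀ x ∈ l, f x = g x) : (l.map f).sum = (l.map g).sum := by
  rw [List.map_congr_left h]

lemma sum_map_add {α : Type*} (l : List α) (f g : α → ZMod 2) :
    (l.map fun x => f x + g x).sum = (l.map f).sum + (l.map g).sum := by
  induction l with
  | nil => simp
  | cons a l ih => simp [ih]; ring

lemma telescope (g : ℤ × ℤ → ZMod 2) :
    ∀ (L : List (ℤ × ℤ)) (h : L ≠ []),
      ((L.zip L.tail).map fun st => g st.1 + g st.2).sum = g (L.head h) + g (L.getLast h)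
  | [], h => absurd rfl h
  | [a], _ => by simpa using (zmod2_add_self (g a)).symm
  | a :: b :: L, _ => by
    have ih := telescope g (b :: L) (List.cons_ne_nil _ _)
    simp only [List.tail_cons, List.zip_cons_cons, List.map_cons, List.sum_cons,
      List.head_cons] at ih ⊢
    rw [ih, List.getLast_cons (List.cons_ne_nil b L)]
    exact zmod2_tele _ _ _

lemma chain_zip {r : ℤ × ℤ → ℤ × ℤ → Prop} :
    ∀ (M : List (ℤ × ℤ)) (a : ℤ × ℤ), List.Chain r a M →
      ∀ st ∈ (a :: M).zip M, r st.1 st.2 := by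
  intro M
  induction M with
  | nil => intro a _ st hst; simp at hst
  | cons b M ih =>
    intro a h st hst
    rcases List.chain_cons.mp h with ⟨hab, hch⟩
    rw [List.zip_cons_cons] at hst
    rcases List.mem_cons.mp hst with h1 | h1
    · subst h1; exact hab
    · exact ih b hch st h1

lemma chain_mem {P : Set (ℤ × ℤ)} {r : ℤ × ℤ → ℤ × ℤ → Prop}
    (hr : ∀ a b, r a b → b ∈ P) :
    ∀ (M : List (ℤ × ℤ)) (a : ℤ × ℤ), List.Chain r a M → ∀ x ∈ M, x ∈ P := by
  intro M
  induction M with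
  | nil => intro a _ x hx; simp at hx
  | cons b M ih =>
    intro a h x hx
    rcases List.chain_cons.mp h with ⟨hab, hch⟩
    rcases List.mem_cons.mp hx with h1 | h1
    · subst h1; exact hr _ _ hab
    · exact ih b hch x h1

lemma chain_snoc {r : ℤ × ℤ → ℤ × ℤ → Prop} :
    ∀ (M : List (ℤ × ℤ)) (a z : ℤ × ℤ), List.Chain r a M →
      r ((a :: M).getLast (List.cons_ne_nil a M)) z → List.Chain r a (M ++ [z]) := by
  intro M
  induction M with
  | nil =>
    intro a z _ h2
    simp only [List.nil_append]
    exact List.Chain.cons (by simpa using h2) List.Chain.nil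
  | cons b M ih =>
    intro a z h1 h2
    rcases List.chain_cons.mp h1 with ⟨hab, hch⟩
    rw [List.getLast_cons (List.cons_ne_nil b M)] at h2
    exact List.chain_cons.mpr ⟨hab, ih b z hch h2⟩

lemma rtg_list {r : ℤ × ℤ → ℤ × ℤ → Prop} {p q : ℤ × ℤ}
    (h : Relation.ReflTransGen r p q) :
    ∃ M : List (ℤ × ℤ), List.Chain r p M ∧ (p :: M).getLast (List.cons_ne_nil _ _) = q := by
  induction h using Relation.ReflTransGen.head_induction_on with
  | refl => exact ⟨[], List.Chain.nil, rfl⟩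
  | head hstep _ ih =>
    obtain ⟨M, h1, h2⟩ := ih
    refine ⟨_ :: M, List.chain_cons.mpr ⟨hstep, h1⟩, ?_⟩
    rw [List.getLast_cons (List.cons_ne_nil _ _)]
    exact h2

lemma steps_append_last (z : ℤ × ℤ) :
    ∀ (K : List (ℤ × ℤ)) (h : K ≠ []),
      (K ++ [z]).zip ((K ++ [z]).tail) = K.zip K.tail ++ [(K.getLast h, z)] := by
  intro K
  induction K with
  | nil => intro h; exact absurd rfl h
  | cons a K ih =>
    intro _
    cases K with
    | nil => simp
    | cons b K =>
      have h2 := ih (List.cons_ne_nil b K)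
      simp only [List.cons_append, List.tail_cons, List.zip_cons_cons] at *
      rw [h2, List.getLast_cons (List.cons_ne_nil b K)]

def bnd (F : List (ℤ × ℤ)) : ℤ := (F.map fun p => |p.1| + |p.2|).foldr max 0

lemma le_foldr_max : ∀ (l : List ℤ) (x : ℤ), x ∈ l → x ≤ l.foldr max 0 := by
  intro l
  induction l with
  | nil => intro x hx; simp at hx
  | cons a l ih =>
    intro x hx
    rcases List.mem_cons.mp hx with h | h
    · subst h; exact le_max_left _ _
    · exact (ih x h).trans (le_max_right _ _)

lemma bnd_coords {F : List (ℤ × ℤ)} {p : ℤ × ℤ} (h : p ∈ F) :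
    -bnd F ≤ p.1 ∧ p.1 ≤ bnd F ∧ -bnd F ≤ p.2 ∧ p.2 ≤ bnd F := by
  have h1 : |p.1| + |p.2| ≤ bnd F := le_foldr_max _ _ (List.mem_map_of_mem (f := fun p : ℤ × ℤ => |p.1| + |p.2|) h)
  have := abs_nonneg p.1
  have := abs_nonneg p.2
  have := le_abs_self p.1
  have := neg_abs_le p.1
  have := le_abs_self p.2
  have := neg_abs_le p.2
  refine ⟨by linarith, by linarith, by linarith, by linarith⟩

/- ### Per-step lemmas -/

lemma ne_coords {S : Set (ℤ × ℤ)} {a1 a2 u v : ℤ}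
    (hp : (a1, a2) ∈ S) (h : ((u, v) : ℤ × ℤ) ∉ S) : ¬(a1 = u ∧ a2 = v) := by
  rintro ⟨h1, h2⟩
  exact h (by rw [← h1, ← h2]; exact hp)

lemma cross_step_horiz {S : Set (ℤ × ℤ)} {x0 y0 : ℤ} (hq : ((x0 + 1, y0) : ℤ × ℤ) ∉ S)
    {st : (ℤ × ℤ) × (ℤ × ℤ)} (ha : st.1 ∈ S) (hb : st.2 ∈ S) (hadj : adj st.1 st.2) :
    pcross (x0, y0) st ↔ pcross (x0 + 1, y0) st := by
  obtain ⟨⟨a1, a2⟩, ⟨b1, b2⟩⟩ := st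
  have h1 := ne_coords ha hq
  have h2 := ne_coords hb hq
  have hl := adj_iff.mp hadj
  simp only [pcross] at *
  omega

lemma cross_step_vert {S : Set (ℤ × ℤ)} {x0 y0 : ℤ} (hq : ((x0, y0 + 1) : ℤ × ℤ) ∉ S)
    {st : (ℤ × ℤ) × (ℤ × ℤ)} (ha : st.1 ∈ S) (hb : st.2 ∈ S) (hadj : adj st.1 st.2) :
    ind (pcross (x0, y0) st) + ind (pcross (x0, y0 + 1) st) =
      ind (st.1.2 = y0 + 1 ∧ x0 < st.1.1) + ind (st.2.2 = y0 + 1 ∧ x0 < st.2.1) := by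
  rw [ind_add_ind, ind_add_ind]
  apply ind_congr
  obtain ⟨⟨a1, a2⟩, ⟨b1, b2⟩⟩ := st
  have h1 := ne_coords ha hq
  have h2 := ne_coords hb hq
  have hl := adj_iff.mp hadj
  simp only [pcross] at *
  omega

lemma cross_step_far {x0 y0 : ℤ} {st : (ℤ × ℤ) × (ℤ × ℤ)}
    (hadj : adj st.1 st.2) (hfar : x0 < st.1.1) :
    ind (pcross (x0, y0) st) = ind (y0 + 1 ≤ st.1.2) + ind (y0 + 1 ≤ st.2.2) := by
  rw [ind_add_ind]
  apply ind_congr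
  obtain ⟨⟨a1, a2⟩, ⟨b1, b2⟩⟩ := st
  have hl := adj_iff.mp hadj
  simp only [pcross] at *
  omega

lemma cross_step_ew {P : Set (ℤ × ℤ)} {x y : ℤ} (hc : ((x, y) : ℤ × ℤ) ∉ P)
    (he : ((x + 1, y) : ℤ × ℤ) ∉ P)
    {st : (ℤ × ℤ) × (ℤ × ℤ)} (ha : st.1 ∈ P) (hb : st.2 ∈ P) (hadj : adj st.1 st.2) :
    pcross (x - 1, y) st ↔ pcross (x + 1, y) st := by
  obtain ⟨⟨a1, a2⟩, ⟨b1, b2⟩⟩ := st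
  have h1 := ne_coords ha hc
  have h2 := ne_coords hb hc
  have h3 := ne_coords ha he
  have h4 := ne_coords hb he
  have hl := adj_iff.mp hadj
  simp only [pcross] at *
  omega

/- ### Whole-loop lemmas -/

lemma crossZ_horiz {S : Set (ℤ × ℤ)} {F : List (ℤ × ℤ)} (hmem : ∀ p ∈ F, p ∈ S)
    (hadj : ∀ st ∈ F.zip F.tail, adj st.1 st.2) {x0 y0 : ℤ}
    (hq : ((x0 + 1, y0) : ℤ × ℤ) ∉ S) :
    crossZ (x0, y0) F = crossZ (x0 + 1, y0) F := by
  unfold crossZ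
  apply sum_map_congr
  intro st hst
  obtain ⟨h1, h2⟩ := List.of_mem_zip hst
  exact ind_congr (cross_step_horiz hq (hmem _ h1) (hmem _ (List.mem_of_mem_tail h2)) (hadj st hst))

lemma crossZ_vert {S : Set (ℤ × ℤ)} {F : List (ℤ × ℤ)} (hne : F ≠ [])
    (hcl : F.head hne = F.getLast hne) (hmem : ∀ p ∈ F, p ∈ S)
    (hadj : ∀ st ∈ F.zip F.tail, adj st.1 st.2) {x0 y0 : ℤ}
    (hq : ((x0, y0 + 1) : ℤ × ℤ) ∉ S) :
    crossZ (x0, y0) F = crossZ (x0, y0 + 1) F := by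
  apply zmod2_eq_of_add_eq_zero
  unfold crossZ
  rw [← sum_map_add]
  have hc : ∀ st ∈ F.zip F.tail,
      (fun st => ind (pcross (x0, y0) st) + ind (pcross (x0, y0 + 1) st)) st =
      (fun st => (fun p => ind (p.2 = y0 + 1 ∧ x0 < p.1)) st.1 +
                 (fun p => ind (p.2 = y0 + 1 ∧ x0 < p.1)) st.2) st := by
    intro st hst
    obtain ⟨h1, h2⟩ := List.of_mem_zip hst
    exact cross_step_vert hq (hmem _ h1) (hmem _ (List.mem_of_mem_tail h2)) (hadj st hst)
  rw [sum_map_congr hc]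
  have ht := telescope (fun p => ind (p.2 = y0 + 1 ∧ x0 < p.1)) F hne
  rw [hcl] at ht
  exact ht.trans (zmod2_add_self _)

lemma crossZ_far (F : List (ℤ × ℤ)) (hne : F ≠ [])
    (hcl : F.head hne = F.getLast hne)
    (hadj : ∀ st ∈ F.zip F.tail, adj st.1 st.2) {x0 y0 : ℤ}
    (hfar : x0 < -bnd F) :
    crossZ (x0, y0) F = 0 := by
  unfold crossZ
  have hc : ∀ st ∈ F.zip F.tail,
      (fun st => ind (pcross (x0, y0) st)) st =
      (fun st => (fun p => ind (y0 + 1 ≤ p.2)) st.1 + (fun p => ind (y0 + 1 ≤ p.2)) st.2) st := by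
    intro st hst
    obtain ⟨h1, h2⟩ := List.of_mem_zip hst
    have hb1 := (bnd_coords h1).1
    exact cross_step_far (hadj st hst) (by linarith)
  rw [sum_map_congr hc]
  have ht := telescope (fun p => ind (y0 + 1 ≤ p.2)) F hne
  rw [hcl] at ht
  exact ht.trans (zmod2_add_self _)

lemma crossZ_bound {F : List (ℤ × ℤ)} (hne : F ≠ [])
    (hcl : F.head hne = F.getLast hne)
    (hadj : ∀ st ∈ F.zip F.tail, adj st.1 st.2) {q : ℤ × ℤ}
    (h1 : crossZ q F = 1) :
    |q.1| ≤ bnd F + 1 ∧ |q.2| ≤ bnd F + 1 := by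
  obtain ⟨x0, y0⟩ := q
  -- there exists a crossing step
  have hex : ∃ st ∈ F.zip F.tail, pcross (x0, y0) st := by
    by_contra hno
    push_neg at hno
    have : crossZ (x0, y0) F = 0 := by
      unfold crossZ
      apply List.sum_eq_zero
      intro x hx
      obtain ⟨st, hst, rfl⟩ := List.mem_map.mp hx
      exact ind_neg (hno st hst)
    rw [this] at h1
    exact absurd h1 (by decide)
  obtain ⟨st, hst, hp⟩ := hex
  obtain ⟨hm1, hm2⟩ := List.of_mem_zip hst
  have hb1 := bnd_coords hm1
  have hb2 := bnd_coords (List.mem_of_mem_tail hm2)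
  -- lower bound on x0
  have hlow : -bnd F ≤ x0 := by
    by_contra hlt
    push_neg at hlt
    have := crossZ_far F hne hcl hadj (x0 := x0) (y0 := y0) (by linarith)
    rw [this] at h1
    exact absurd h1 (by decide)
  obtain ⟨hq1, hcr⟩ := hp
  dsimp only at hq1 hcr
  constructor
  · rw [abs_le]
    exact ⟨by linarith, by linarith [hb1.1, hb1.2.1]⟩
  · rw [abs_le]
    rcases hcr with ⟨h, _⟩ | ⟨h, _⟩ <;>
      exact ⟨by linarith [hb1.2.2.1, hb1.2.2.2], by linarith [hb1.2.2.1, hb1.2.2.2]⟩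

/- ### Main theorem -/

/-- If `P ⊆ ℤ²` is finite and connected, `c ∉ P`, the north and south neighbors
of `c` are in `P`, but the east and west neighbors are not, then `P ∪ {c}` has
a hole. -/
theorem north_south_attachment_creates_hole (P : Set (ℤ × ℤ))
    (hfin : P.Finite) (hconn : ConnectedIn P)
    (c : ℤ × ℤ) (hc : c ∉ P)
    (hnorth : (c.1, c.2 + 1) ∈ P) (hsouth : (c.1, c.2 - 1) ∈ P)
    (heast : (c.1 + 1, c.2) ∉ P) (hwest : (c.1 - 1, c.2) ∉ P) :
    HasHole (P ∪ {c}) := by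
  obtain ⟨x, y⟩ := c
  have hnorth' : ((x, y + 1) : ℤ × ℤ) ∈ P := hnorth
  have hsouth' : ((x, y - 1) : ℤ × ℤ) ∈ P := hsouth
  have heast' : ((x + 1, y) : ℤ × ℤ) ∉ P := heast
  have hwest' : ((x - 1, y) : ℤ × ℤ) ∉ P := hwest
  clear hnorth hsouth heast hwest
  rename' hnorth' => hnorth, hsouth' => hsouth, heast' => heast, hwest' => hwest
  set S : Set (ℤ × ℤ) := P ∪ {(x, y)} with hS
  -- basic memberships in S
  have hcS : ((x, y) : ℤ × ℤ) ∈ S := Or.inr rfl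
  have heS : ((x + 1, y) : ℤ × ℤ) ∉ S := by
    rintro (h | h)
    · exact heast h
    · simp only [Set.mem_singleton_iff, Prod.mk.injEq] at h; omega
  have hwS : ((x - 1, y) : ℤ × ℤ) ∉ S := by
    rintro (h | h)
    · exact hwest h
    · simp only [Set.mem_singleton_iff, Prod.mk.injEq] at h; omega
  -- extract a path from north to south inside P
  obtain ⟨M, hM, hMl⟩ := rtg_list (hconn _ hnorth _ hsouth)
  set n : ℤ × ℤ := (x, y + 1) with hn
  set s : ℤ × ℤ := (x, y - 1) with hs
  set K : List (ℤ × ℤ) := (x, y) :: n :: M with hK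
  set F : List (ℤ × ℤ) := K ++ [(x, y)] with hF
  have hFne : F ≠ [] := by simp [hF, hK]
  have hKne : K ≠ [] := by simp [hK]
  have hhead : F.head hFne = (x, y) := by simp [hF, hK]
  have hlast : F.getLast hFne = (x, y) := List.getLast_append _
  have hcl : F.head hFne = F.getLast hFne := by rw [hhead, hlast]
  -- membership of loop cells
  have hMP : ∀ p ∈ M, p ∈ P := chain_mem (fun a b h => h.2.2) M n hM
  have hKgl : K.getLast hKne = s :=
    (List.getLast_cons (List.cons_ne_nil n M)).trans hMl
  have hmem : ∀ p ∈ F, p ∈ S := by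
    intro p hp
    rw [hF, List.mem_append] at hp
    rcases hp with hp | hp
    · rw [hK] at hp
      rcases List.mem_cons.mp hp with h | hp
      · subst h; exact hcS
      · rcases List.mem_cons.mp hp with h | hp
        · subst h; exact Or.inl hnorth
        · exact Or.inl (hMP p hp)
    · simp only [List.mem_singleton] at hp; subst hp; exact hcS
  -- chain of adjacencies along F
  have hadjcn : adj (x, y) n := by rw [adj_iff]; simp [hn]
  have hadjsc : adj s (x, y) := by rw [adj_iff]; simp [hs]
  have hMadj : List.Chain adj n M := List.Chain.imp (fun _ _ h => h.1) hM
  have hchainK : List.Chain adj (x, y) (n :: M) := List.chain_cons.mpr ⟨hadjcn, hMadj⟩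
  have hchainF : List.Chain adj (x, y) (n :: M ++ [(x, y)]) := by
    have := chain_snoc (n :: M) (x, y) (x, y) hchainK (by
      rw [show ((x, y) :: n :: M).getLast (List.cons_ne_nil _ _) = K.getLast hKne from rfl, hKgl]
      exact hadjsc)
    simpa using this
  have hadjF : ∀ st ∈ F.zip F.tail, adj st.1 st.2 := by
    have hFe : F = (x, y) :: (n :: M ++ [(x, y)]) := by simp [hF, hK]
    intro st hst
    apply chain_zip (n :: M ++ [(x, y)]) (x, y) hchainF
    have : F.tail = n :: M ++ [(x, y)] := by rw [hFe]; rfl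
    rw [hFe] at hst
    simpa using hst
  -- step decomposition of F
  have hsplit : F.zip F.tail = ((x, y), n) :: (n :: M).zip M ++ [(s, (x, y))] := by
    rw [hF, steps_append_last _ K hKne, hKgl, hK]
    rfl
  -- interior steps: adjacency and membership in P
  have hintadj : ∀ st ∈ (n :: M).zip M, adj st.1 st.2 := chain_zip M n hMadj
  have hintmem : ∀ st ∈ (n :: M).zip M, st.1 ∈ P ∧ st.2 ∈ P := by
    intro st hst
    obtain ⟨h1, h2⟩ := List.of_mem_zip hst
    refine ⟨?_, hMP _ h2⟩
    rcases List.mem_cons.mp h1 with h | h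
    · rw [h]; exact hnorth
    · exact hMP _ h
  -- crossZ values at the two special steps
  have hcw : crossZ (x - 1, y) F = crossZ (x + 1, y) F + 1 := by
    unfold crossZ
    rw [hsplit]
    simp only [List.map_cons, List.map_append, List.sum_cons, List.sum_append,
      List.map_cons, List.map_nil, List.sum_cons, List.sum_nil]
    have e1 : ind (pcross (x - 1, y) ((x, y), n)) = 1 := by
      apply ind_pos
      exact ⟨show (x : ℤ) - 1 < x by omega, Or.inl ⟨rfl, rfl⟩⟩
    have e2 : ind (pcross (x + 1, y) ((x, y), n)) = 0 := by
      apply ind_neg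
      intro hp
      exact absurd (show (x : ℤ) + 1 < x from hp.1) (by omega)
    have e34 : ∀ u : ℤ, ¬ pcross (u, y) (s, (x, y)) := by
      intro u hp
      rcases hp.2 with ⟨h1, -⟩ | ⟨h1, -⟩
      · exact absurd (show (y : ℤ) - 1 = y from h1) (by omega)
      · exact absurd (show (y : ℤ) - 1 = y + 1 from h1) (by omega)
    have e3 : ind (pcross (x - 1, y) (s, (x, y))) = 0 := ind_neg (e34 _)
    have e4 : ind (pcross (x + 1, y) (s, (x, y))) = 0 := ind_neg (e34 _)
    have eint : (((n :: M).zip M).map fun st => ind (pcross (x - 1, y) st)).sum =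
        (((n :: M).zip M).map fun st => ind (pcross (x + 1, y) st)).sum := by
      apply sum_map_congr
      intro st hst
      obtain ⟨hp1, hp2⟩ := hintmem st hst
      exact ind_congr (cross_step_ew hc heast hp1 hp2 (hintadj st hst))
    rw [e1, e2, e3, e4, eint]
    ring
  -- invariance of crossZ along complement steps
  have hinv : ∀ a b : ℤ × ℤ, a ∉ S → b ∉ S → adj a b → crossZ a F = crossZ b F := by
    intro a b haS hbS hab
    rcases adj_iff.mp hab with ⟨h1, h2 | h2⟩ | ⟨h1, h2 | h2⟩
    · -- a.2 = b.2 + 1 : a is above b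
      have ha' : a = (b.1, b.2 + 1) := Prod.ext_iff.mpr ⟨h1, h2⟩
      rw [ha']
      exact (crossZ_vert hFne hcl hmem hadjF (ha' ▸ haS)).symm
    · -- b.2 = a.2 + 1 : b is above a
      have hb' : b = (a.1, a.2 + 1) := Prod.ext_iff.mpr ⟨h1.symm, h2⟩
      rw [hb']
      exact crossZ_vert hFne hcl hmem hadjF (hb' ▸ hbS)
    · -- a.1 = b.1 + 1
      have ha' : a = (b.1 + 1, b.2) := Prod.ext_iff.mpr ⟨h2, h1⟩
      rw [ha']
      exact (crossZ_horiz hmem hadjF (ha' ▸ haS)).symm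
    · -- b.1 = a.1 + 1
      have hb' : b = (a.1 + 1, a.2) := Prod.ext_iff.mpr ⟨h2, h1.symm⟩
      rw [hb']
      exact crossZ_horiz hmem hadjF (hb' ▸ hbS)
  -- pick the starting point with odd crossing number
  have hpick : ∃ x0 : ℤ × ℤ, x0 ∉ S ∧ crossZ x0 F = 1 := by
    rcases zmod2_cases (crossZ (x + 1, y) F) with h | h
    · exact ⟨(x - 1, y), hwS, by rw [hcw, h, zero_add]⟩
    · exact ⟨(x + 1, y), heS, h⟩
  obtain ⟨x0, hx0S, hx0⟩ := hpick
  unfold HasHole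
  refine ⟨x0, hx0S, bnd F + 1, ?_⟩
  intro q hq
  have hq1 : crossZ q F = 1 := by
    induction hq with
    | refl => exact hx0
    | tail _ hr ih =>
      rw [← hinv _ _ hr.2.1 hr.2.2 hr.1]
      exact ih
  exact crossZ_bound hFne hcl hadjF hq1
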